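/- Let p ≥ q ≥ r be positive integers with gcd(p,q,r)=1 such that q divides p and p+q ≥ rq. Let a be the unique integer with 0 ≤ a < q such that q divides n−a. Then the maximum size of a subset of {1,...,n} containing no solution (x,y,z) to px+qy=rz equals ⌈(p+q−r)(n−a)/(p+q)⌉ + a. -/

import Mathlib

lemma arith1 (q s r mm t : ℕ) (hq : 0 < q) (hs : 0 < s)
    (hrm_lt : r * mm < s * t + s) (htrm : s * t ≤ r * mm)
    (htqm : t ≤ q * mm) (hrqs : r ≤ q * s) :
    ((q * s - r) * (q * mm) + (q * s) - 1) / (q * s) = q * mm - t := by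
  have hqs1 : 1 ≤ q * s := Nat.mul_pos hq hs
  have hone : (1:ℕ) ≤ (q * s - r) * (q * mm) + q * s := le_trans hqs1 (Nat.le_add_left _ _)
  have hlo : (q * mm - t) * (q * s) ≤ (q * s - r) * (q * mm) + q * s - 1 := by
    zify [htqm, hrqs, hone]
    have h1 : (r:ℤ) * mm + 1 ≤ s * t + s := by exact_mod_cast hrm_lt
    have h3 : (1:ℤ) ≤ q := by exact_mod_cast hq
    nlinarith [mul_le_mul_of_nonneg_left h1 (by linarith : (0:ℤ) ≤ (q:ℤ))]
  have hhi : (q * s - r) * (q * mm) + q * s - 1 < (q * mm - t + 1) * (q * s) := by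
    zify [htqm, hrqs, hone]
    have h2 : (s:ℤ) * t ≤ r * mm := by exact_mod_cast htrm
    have h3 : (1:ℤ) ≤ q := by exact_mod_cast hq
    nlinarith [mul_le_mul_of_nonneg_left h2 (by linarith : (0:ℤ) ≤ (q:ℤ))]
  exact Nat.div_eq_of_lt_le hlo hhi


set_option maxHeartbeats 1000000 in
lemma upper5 (q s r k n mm t : ℕ) (hq : 0 < q) (hr : 0 < r) (hk1 : 1 ≤ k)
    (hs_def : s = k + 1) (hrq : r ≤ q) (hrs : r ≤ s) (hqmn : q * mm ≤ n)
    (ht_def : t = r * mm / s)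
    (A : Finset ℕ) (hA : A ⊆ Finset.Icc 1 n)
    (hfree : ∀ x ∈ A, ∀ y ∈ A, ∀ z ∈ A, (q * k) * x + q * y ≠ r * z) :
    A.card ≤ n - t := by
  classical
  have hs : 0 < s := by omega
  have hcardIcc : (Finset.Icc 1 n).card = n := by rw [Nat.card_Icc]; omega
  have htm : t ≤ mm := by
    have h1 : r * mm ≤ s * mm := Nat.mul_le_mul_right mm hrs
    have h2 : r * mm / s ≤ s * mm / s := Nat.div_le_div_right h1
    rw [Nat.mul_div_cancel_left mm hs] at h2
    omega
  by_cases hB : ∃ z ∈ Finset.Icc 1 mm, q * z ∈ A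
  · -- main case: some multiple of q is in A
    set B := (Finset.Icc 1 mm).filter (fun z => q * z ∈ A) with hBdef
    have hBne : B.Nonempty := by
      obtain ⟨z, hz1, hz2⟩ := hB
      exact ⟨z, Finset.mem_filter.2 ⟨hz1, hz2⟩⟩
    set z₀ := B.max' hBne with hz₀def
    have hz₀B : z₀ ∈ B := B.max'_mem hBne
    have hz₀Icc : z₀ ∈ Finset.Icc 1 mm := (Finset.mem_filter.1 hz₀B).1
    have hz₀A : q * z₀ ∈ A := (Finset.mem_filter.1 hz₀B).2
    have hz₀1 : 1 ≤ z₀ := (Finset.mem_Icc.1 hz₀Icc).1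
    have hz₀m : z₀ ≤ mm := (Finset.mem_Icc.1 hz₀Icc).2
    have hmax : ∀ z, z ∈ Finset.Icc 1 mm → q * z ∈ A → z ≤ z₀ := fun z h1 h2 =>
      B.le_max' z (Finset.mem_filter.2 ⟨h1, h2⟩)
    obtain ⟨u, hu_def⟩ : ∃ u, u = r * z₀ := ⟨_, rfl⟩
    have hu1 : 1 ≤ u := by rw [hu_def]; exact Nat.mul_pos hr hz₀1
    have huqz : u ≤ q * z₀ := by rw [hu_def]; exact Nat.mul_le_mul_right _ hrq
    have hqzn : q * z₀ ≤ n := le_trans (Nat.mul_le_mul_left q hz₀m) hqmn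
    have hun : u ≤ n := le_trans huqz hqzn
    obtain ⟨X, hX_def⟩ : ∃ X, X = (u - 1) / s := ⟨_, rfl⟩
    have hXs : X * s ≤ u - 1 := by rw [hX_def]; exact Nat.div_mul_le_self _ _
    have hXu : X ≤ u - 1 := by rw [hX_def]; exact Nat.div_le_self _ _
    have hF : ∀ x, x ∈ Finset.Icc 1 X → k * x + (X + 1) ≤ u := by
      intro x hx
      obtain ⟨hx1, hx2⟩ := Finset.mem_Icc.1 hx
      have e1 : k * x ≤ k * X := Nat.mul_le_mul_left k hx2
      have e2 : k * X + (X + 1) = X * s + 1 := by rw [hs_def]; ring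
      omega
    set f : ℕ → ℕ := fun x => if x ∈ A then u - k * x else x with hf_def
    set D1 := (Finset.Ioc z₀ mm).image (fun z => q * z) with hD1
    set D2 := (Finset.Icc 1 X).image f with hD2
    set D3 := if s ∣ u then ({u / s} : Finset ℕ) else ∅ with hD3
    have hsolve : ∀ y, k * y ≤ u → (q * k) * y + q * (u - k * y) = r * (q * z₀) := by
      intro y hy
      have h1 : (q*k) * y + q * (u - k*y) = q * (k * y + (u - k * y)) := by ring
      have h2 : k * y + (u - k * y) = u := by omega
      rw [h1, h2, hu_def]; ring
    have hfA : ∀ x ∈ Finset.Icc 1 X, f x ∉ A := by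
      intro x hx
      by_cases hxA : x ∈ A
      · simp only [hf_def, if_pos hxA]
        intro hyA
        have hkxu : k * x ≤ u := le_trans (Nat.le_add_right _ _) (hF x hx)
        exact hfree x hxA _ hyA (q * z₀) hz₀A (hsolve x hkxu)
      · simpa only [hf_def, if_neg hxA] using hxA
    have hfhigh : ∀ x ∈ Finset.Icc 1 X, x ∈ A → X + 1 ≤ f x := by
      intro x hx hxA
      simp only [hf_def, if_pos hxA]
      have := hF x hx
      omega
    have hfle : ∀ x ∈ Finset.Icc 1 X, f x ≤ u - 1 := by
      intro x hx
      obtain ⟨hx1, hx2⟩ := Finset.mem_Icc.1 hx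
      by_cases hxA : x ∈ A
      · simp only [hf_def, if_pos hxA]
        have h1 : k * 1 ≤ k * x := Nat.mul_le_mul_left k hx1
        omega
      · simp only [hf_def, if_neg hxA]
        omega
    have hinj : Set.InjOn f (Finset.Icc 1 X) := by
      intro x1 h1 x2 h2 heq
      simp only [Finset.coe_Icc, Set.mem_Icc] at h1 h2
      have h1' : x1 ∈ Finset.Icc 1 X := Finset.mem_Icc.2 h1
      have h2' : x2 ∈ Finset.Icc 1 X := Finset.mem_Icc.2 h2
      by_cases a1 : x1 ∈ A <;> by_cases a2 : x2 ∈ A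
      · simp only [hf_def, if_pos a1, if_pos a2] at heq
        have e1 : k * x1 ≤ u := le_trans (Nat.le_add_right _ _) (hF x1 h1')
        have e2 : k * x2 ≤ u := le_trans (Nat.le_add_right _ _) (hF x2 h2')
        have e3 : k * x1 = k * x2 := by omega
        exact Nat.eq_of_mul_eq_mul_left (by omega) e3
      · exfalso
        have h5 : X + 1 ≤ f x1 := hfhigh x1 h1' a1
        simp only [hf_def, if_pos a1, if_neg a2] at heq h5
        omega
      · exfalso
        have h5 : X + 1 ≤ f x2 := hfhigh x2 h2' a2
        simp only [hf_def, if_pos a2, if_neg a1] at heq h5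
        omega
      · simpa only [hf_def, if_neg a1, if_neg a2] using heq
    have hcard1 : D1.card = mm - z₀ := by
      rw [hD1, Finset.card_image_of_injOn (fun y1 _ y2 _ h => Nat.eq_of_mul_eq_mul_left hq h),
        Nat.card_Ioc]
    have hcard2 : D2.card = X := by
      rw [hD2, Finset.card_image_of_injOn hinj, Nat.card_Icc]; omega
    have hcard3 : D3.card = if s ∣ u then 1 else 0 := by
      rw [hD3]; split <;> simp
    have hD1mem : ∀ w ∈ D1, u + 1 ≤ w ∧ w ≤ n ∧ w ∉ A := by
      intro w hw
      rw [hD1] at hw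
      obtain ⟨z, hz, rfl⟩ := Finset.mem_image.1 hw
      obtain ⟨hz1, hz2⟩ := Finset.mem_Ioc.1 hz
      refine ⟨?_, ?_, ?_⟩
      · have h1 : q * (z₀ + 1) ≤ q * z := Nat.mul_le_mul_left q hz1
        have h2 : q * (z₀ + 1) = q * z₀ + q := by ring
        omega
      · exact le_trans (Nat.mul_le_mul_left q hz2) hqmn
      · intro hzA
        have h3 : z ≤ z₀ := hmax z (Finset.mem_Icc.2 ⟨by omega, hz2⟩) hzA
        omega
    have hD2mem : ∀ w ∈ D2, 1 ≤ w ∧ w ≤ u - 1 ∧ w ∉ A := by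
      intro w hw
      rw [hD2] at hw
      obtain ⟨x, hx, rfl⟩ := Finset.mem_image.1 hw
      obtain ⟨hx1, hx2⟩ := Finset.mem_Icc.1 hx
      refine ⟨?_, hfle x hx, hfA x hx⟩
      by_cases hxA : x ∈ A
      · have := hfhigh x hx hxA; omega
      · simp only [hf_def, if_neg hxA]; omega
    have hD3mem : ∀ w ∈ D3, 1 ≤ w ∧ w ≤ u - 1 ∧ w ∉ A := by
      intro w hw
      rw [hD3] at hw
      split at hw
      case isTrue hdu =>
        rw [Finset.mem_singleton] at hw
        subst hw
        have hsu : s ≤ u := Nat.le_of_dvd (by omega) hdu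
        have hd1 : 1 ≤ u / s := (Nat.one_le_div_iff hs).2 hsu
        have hdlt : u / s < u := Nat.div_lt_self (by omega) (by omega)
        refine ⟨hd1, by omega, ?_⟩
        intro hdA
        have hsd : s * (u / s) = u := Nat.mul_div_cancel' hdu
        refine hfree (u / s) hdA (u / s) hdA (q * z₀) hz₀A ?_
        have hky : k * (u / s) ≤ u := by
          have : k * (u / s) ≤ s * (u / s) := Nat.mul_le_mul_right _ (by omega)
          omega
        have h2 : u - k * (u / s) = u / s := by
          have : k * (u / s) + (u / s) = s * (u / s) := by rw [hs_def]; ring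
          omega
        have := hsolve (u / s) hky
        rwa [h2] at this
      case isFalse => simp at hw
    have hd12 : Disjoint D1 D2 := by
      rw [Finset.disjoint_left]
      intro w h1 h2
      have := (hD1mem w h1).1
      have := (hD2mem w h2).2.1
      omega
    have hd13 : Disjoint D1 D3 := by
      rw [Finset.disjoint_left]
      intro w h1 h3
      have := (hD1mem w h1).1
      have := (hD3mem w h3).2.1
      omega
    have hd23 : Disjoint D2 D3 := by
      rw [Finset.disjoint_left]
      intro w h2 h3
      rw [hD3] at h3
      split at h3
      case isFalse => simp at h3
      case isTrue hdu =>
        rw [Finset.mem_singleton] at h3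
        subst h3
        have hsd : s * (u / s) = u := Nat.mul_div_cancel' hdu
        have hsu : s ≤ u := Nat.le_of_dvd (by omega) hdu
        have hd1 : 1 ≤ u / s := (Nat.one_le_div_iff hs).2 hsu
        have hXd : X + 1 = u / s := by
          have hlo : (u / s - 1) * s ≤ u - 1 := by
            have e1 : (u / s - 1) * s + s = (u / s) * s := by
              have e0 : u / s - 1 + 1 = u / s := by omega
              calc (u / s - 1) * s + s = (u / s - 1 + 1) * s := by ring
                _ = (u / s) * s := by rw [e0]
            have e2 : (u / s) * s = u := by rw [mul_comm]; exact hsd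
            omega
          have hhi : u - 1 < (u / s - 1 + 1) * s := by
            have e0 : u / s - 1 + 1 = u / s := by omega
            rw [e0]
            have e2 : (u / s) * s = u := by rw [mul_comm]; exact hsd
            omega
          have := Nat.div_eq_of_lt_le hlo hhi
          omega
        rw [hD2] at h2
        obtain ⟨x, hx, hfx⟩ := Finset.mem_image.1 h2
        obtain ⟨hx1, hx2⟩ := Finset.mem_Icc.1 hx
        by_cases hxA : x ∈ A
        · have hkey : k * x + (u / s + k) ≤ u := by
            have e1 : k * x ≤ k * X := Nat.mul_le_mul_left k hx2
            have e2 : k * X + (u / s + k) = k * (X + 1) + u / s := by ring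
            have e3 : k * (X + 1) = k * (u / s) := by rw [hXd]
            have e4 : k * (u / s) + u / s = s * (u / s) := by rw [hs_def]; ring
            omega
          simp only [hf_def, if_pos hxA] at hfx
          omega
        · simp only [hf_def, if_neg hxA] at hfx
          omega
    set D := D1 ∪ D2 ∪ D3 with hD
    have hDdisjA : Disjoint A D := by
      rw [Finset.disjoint_right, hD]
      intro w hw
      rcases Finset.mem_union.1 hw with hw' | h3
      · rcases Finset.mem_union.1 hw' with h1 | h2
        · exact (hD1mem w h1).2.2
        · exact (hD2mem w h2).2.2
      · exact (hD3mem w h3).2.2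
    have hDsub : D ⊆ Finset.Icc 1 n := by
      rw [hD]
      intro w hw
      rcases Finset.mem_union.1 hw with hw' | h3
      · rcases Finset.mem_union.1 hw' with h1 | h2
        · have := hD1mem w h1
          exact Finset.mem_Icc.2 ⟨by omega, this.2.1⟩
        · have := hD2mem w h2
          exact Finset.mem_Icc.2 ⟨this.1, by omega⟩
      · have := hD3mem w h3
        exact Finset.mem_Icc.2 ⟨this.1, by omega⟩
    have hDcard : D.card = (mm - z₀) + X + (if s ∣ u then 1 else 0) := by
      rw [hD, Finset.card_union_of_disjoint (Finset.disjoint_union_left.2 ⟨hd13, hd23⟩),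
        Finset.card_union_of_disjoint hd12, hcard1, hcard2, hcard3]
    have hXD : X + (if s ∣ u then 1 else 0) = u / s := by
      have h1 : u - 1 + 1 = u := by omega
      have h2 : (u - 1 + 1) / s = (u - 1) / s + if s ∣ (u - 1 + 1) then 1 else 0 :=
        Nat.succ_div
      rw [h1] at h2
      rw [hX_def, ← h2]
    have htD : t ≤ (mm - z₀) + u / s := by
      have h1 : r * mm ≤ u + s * (mm - z₀) := by
        have e1 : r * (z₀ + (mm - z₀)) = r * z₀ + r * (mm - z₀) := by ring
        have e2 : z₀ + (mm - z₀) = mm := by omega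
        rw [e2] at e1
        have h2 : r * (mm - z₀) ≤ s * (mm - z₀) := Nat.mul_le_mul_right _ hrs
        omega
      have h3 : r * mm / s ≤ (u + s * (mm - z₀)) / s := Nat.div_le_div_right h1
      have h4 : (u + s * (mm - z₀)) / s = u / s + (mm - z₀) := Nat.add_mul_div_left _ _ hs
      omega
    have hcount : A.card + D.card ≤ n := by
      have h1 := Finset.card_le_card (Finset.union_subset hA hDsub)
      rw [Finset.card_union_of_disjoint hDdisjA, hcardIcc] at h1
      exact h1
    have : t ≤ D.card := by
      rw [hDcard]
      omega
    omega
  · push_neg at hB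
    set D := (Finset.Icc 1 mm).image (fun z => q * z) with hD
    have hcardD : D.card = mm := by
      rw [hD, Finset.card_image_of_injOn (fun y1 _ y2 _ h => Nat.eq_of_mul_eq_mul_left hq h),
        Nat.card_Icc]
      omega
    have hDsub : D ⊆ Finset.Icc 1 n := by
      intro w hw
      rw [hD] at hw
      obtain ⟨z, hz, rfl⟩ := Finset.mem_image.1 hw
      obtain ⟨hz1, hz2⟩ := Finset.mem_Icc.1 hz
      have h1 : q * 1 ≤ q * z := Nat.mul_le_mul_left q hz1
      have h2 : q * z ≤ q * mm := Nat.mul_le_mul_left q hz2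
      exact Finset.mem_Icc.2 ⟨by omega, by omega⟩
    have hDdisjA : Disjoint A D := by
      rw [Finset.disjoint_right, hD]
      intro w hw
      obtain ⟨z, hz, rfl⟩ := Finset.mem_image.1 hw
      exact hB z hz
    have hcount : A.card + D.card ≤ n := by
      have h1 := Finset.card_le_card (Finset.union_subset hA hDsub)
      rw [Finset.card_union_of_disjoint hDdisjA, hcardIcc] at h1
      exact h1
    omega


set_option maxHeartbeats 1000000 in
/-- If `q ∣ p` and `p + q ≥ rq`, then the maximum size of a subset of `[n]` with no
solution to `px + qy = rz` equals `⌈(p+q-r)(n-a)/(p+q)⌉ + a`, where `a = n mod q`. -/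
theorem stmt5 (p q r : ℕ) (hrq : r ≤ q) (hqp : q ≤ p) (hr : 0 < r)
    (hgcd : Nat.gcd (Nat.gcd p q) r = 1) (hdvd : q ∣ p) (hge : r * q ≤ p + q)
    (n : ℕ) (hn : 1 ≤ n) :
    IsGreatest {m : ℕ | ∃ A : Finset ℕ, A ⊆ Finset.Icc 1 n ∧
      (∀ x ∈ A, ∀ y ∈ A, ∀ z ∈ A, p * x + q * y ≠ r * z) ∧ A.card = m}
      (((p + q - r) * (n - n % q) + (p + q) - 1) / (p + q) + n % q) := by
  obtain ⟨k, hk⟩ := hdvd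
  have hq : 0 < q := hr.trans_le hrq
  have hk1 : 1 ≤ k := by
    rcases Nat.eq_zero_or_pos k with h | h
    · subst h; simp at hk; omega
    · exact h
  obtain ⟨s, hs_def⟩ : ∃ s, s = k + 1 := ⟨_, rfl⟩
  have hs : 0 < s := by omega
  have hps : p + q = q * s := by rw [hk, hs_def]; ring
  have hrs : r ≤ s := by
    have h1 : r * q ≤ s * q := by rw [mul_comm s q, ← hps]; exact hge
    exact Nat.le_of_mul_le_mul_right h1 hq
  have hcop : Nat.Coprime q r := by
    have h1 : Nat.gcd p q = q := Nat.gcd_eq_right ⟨k, hk⟩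
    rw [h1] at hgcd
    exact hgcd
  obtain ⟨a, ha_def⟩ : ∃ a, a = n % q := ⟨_, rfl⟩
  obtain ⟨m, hm_def⟩ : ∃ m, m = n / q := ⟨_, rfl⟩
  have hnm : q * m + a = n := by rw [ha_def, hm_def]; exact Nat.div_add_mod n q
  obtain ⟨t, ht_def⟩ : ∃ t, t = r * m / s := ⟨_, rfl⟩
  have hst : s * t + r * m % s = r * m := by rw [ht_def]; exact Nat.div_add_mod (r * m) s
  have hmod : r * m % s < s := Nat.mod_lt _ hs
  have htrm : s * t ≤ r * m := by omega
  have hrm_lt : r * m < s * t + s := by omega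
  have htm : t ≤ m := by
    have h1 : r * m ≤ s * m := Nat.mul_le_mul_right m hrs
    have h2 : r * m / s ≤ s * m / s := Nat.div_le_div_right h1
    rw [Nat.mul_div_cancel_left m hs] at h2
    omega
  have hmqm : m ≤ q * m := Nat.le_mul_of_pos_left m hq
  have htqm : t ≤ q * m := le_trans htm hmqm
  have hqmn : q * m ≤ n := by omega
  have hna : n - a = q * m := by omega
  have hrqs : r ≤ q * s := by
    have h1 : 1 * s ≤ q * s := Nat.mul_le_mul_right s hq
    omega
  have hval : ((p + q - r) * (n - n % q) + (p + q) - 1) / (p + q) + n % q = n - t := by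
    rw [hps, ← ha_def, hna]
    rw [arith1 q s r m t hq hs hrm_lt htrm htqm hrqs]
    omega
  constructor
  · refine ⟨Finset.Icc (t + 1) n, Finset.Icc_subset_Icc (by omega) le_rfl, ?_, ?_⟩
    · intro x hx y hy z hz heq
      obtain ⟨hx1, hx2⟩ := Finset.mem_Icc.1 hx
      obtain ⟨hy1, hy2⟩ := Finset.mem_Icc.1 hy
      obtain ⟨hz1, hz2⟩ := Finset.mem_Icc.1 hz
      have hdq : q ∣ r * z := ⟨k * x + y, by rw [← heq, hk]; ring⟩
      have hdz : q ∣ z := by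
        exact Nat.Coprime.dvd_of_dvd_mul_left hcop hdq
      obtain ⟨w, rfl⟩ := hdz
      have hwm : w ≤ m := by
        rw [hm_def]
        exact (Nat.le_div_iff_mul_le hq).2 (by rw [mul_comm]; exact hz2)
      have heq2 : k * x + y = r * w := by
        have h1 : q * (k * x + y) = q * (r * w) := by
          calc q * (k * x + y) = p * x + q * y := by rw [hk]; ring
            _ = r * (q * w) := heq
            _ = q * (r * w) := by ring
        exact Nat.eq_of_mul_eq_mul_left hq h1
      have c1 : s * (t + 1) ≤ k * x + y := by
        have e : s * (t + 1) = k * (t + 1) + (t + 1) := by rw [hs_def]; ring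
        rw [e]
        exact add_le_add (Nat.mul_le_mul_left k hx1) hy1
      have c2 : r * w ≤ r * m := Nat.mul_le_mul_left r hwm
      have e2 : s * (t + 1) = s * t + s := by ring
      omega
    · rw [hval, Nat.card_Icc]
      omega
  · rintro b ⟨A, hA, hfree, rfl⟩
    rw [hval]
    refine upper5 q s r k n m t hq hr hk1 hs_def hrq hrs hqmn ht_def A hA ?_
    intro x hx y hy z hz
    rw [← hk]
    exact hfree x hx y hy z hz
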